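/- For every integer k ≥ 3 and every graph H whose girth ℓ is odd, H is not locally k-common: for every ε₀ > 0 there exist graphons W₁,…,W_k with W₁+⋯+W_k = 1, ‖W_i − 1/k‖_∞ ≤ ε₀ for all i, and t(H,W₁)+⋯+t(H,W_k) < k^{−e(H)+1}. -/

import Mathlib

open MeasureTheory

noncomputable section

/-- The Lebesgue measure restricted to `[0,1]`. -/
abbrev muI : Measure ℝ := volume.restrict (Set.Icc 0 1)

/-- A graphon: a symmetric measurable function `[0,1]² → [0,1]`
(represented as a function on `ℝ²`). -/
def IsGraphon (W : ℝ → ℝ → ℝ) : Prop :=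
  Measurable (Function.uncurry W) ∧ (∀ x y, W x y = W y x) ∧
    (∀ x y, W x y ∈ Set.Icc (0:ℝ) 1)

/-- The edges of a graph on `Fin m`, each listed once as an ordered pair. -/
def edgeFinset' {m : ℕ} (G : SimpleGraph (Fin m)) [DecidableRel G.Adj] :
    Finset (Fin m × Fin m) :=
  Finset.univ.filter fun p => p.1 < p.2 ∧ G.Adj p.1 p.2

/-- The number of edges of `G`. -/
def edgeCount {m : ℕ} (G : SimpleGraph (Fin m)) [DecidableRel G.Adj] : ℕ :=
  (edgeFinset' G).card

/-- The homomorphism density `t(G, W)`. -/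
def homDensity {m : ℕ} (G : SimpleGraph (Fin m)) [DecidableRel G.Adj]
    (W : ℝ → ℝ → ℝ) : ℝ :=
  ∫ x : Fin m → ℝ, ∏ p ∈ edgeFinset' G, W (x p.1) (x p.2)
    ∂(Measure.pi fun _ => muI)

/-- The single-edge graph `K₂`. -/
abbrev K2 : SimpleGraph (Fin 2) := ⊤

/-- The complete bipartite graph `K_{a,b}` on `Fin (a+b)`. -/
def bip (a b : ℕ) : SimpleGraph (Fin (a + b)) where
  Adj i j := (decide (i.val < a)) ≠ (decide (j.val < a))
  symm := ⟨fun _ _ h => h.symm⟩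
  loopless := ⟨fun _ h => h rfl⟩

instance (a b : ℕ) : DecidableRel (bip a b).Adj :=
  fun i j => inferInstanceAs (Decidable (_ ≠ _))

/-- The cycle `C_n` on `Fin n` (for `n ≥ 3`). -/
def cyc (n : ℕ) : SimpleGraph (Fin n) where
  Adj i j := i ≠ j ∧ ((i.val + 1) % n = j.val ∨ (j.val + 1) % n = i.val)
  symm := ⟨fun _ _ h => ⟨h.1.symm, h.2.symm⟩⟩
  loopless := ⟨fun _ h => h.1 rfl⟩

instance (n : ℕ) : DecidableRel (cyc n).Adj :=
  fun i j => inferInstanceAs (Decidable (_ ∧ _))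

namespace OG

instance : IsProbabilityMeasure muI := by
  constructor
  simp [Real.volume_Icc]

/-- sign function -/
def sgn : ℝ → ℝ := fun x => if x ≤ 1/2 then 1 else -1

lemma sgn_meas : Measurable sgn :=
  Measurable.ite measurableSet_Iic measurable_const measurable_const

lemma abs_sgn (x : ℝ) : |sgn x| = 1 := by
  unfold sgn; split <;> simp

lemma sgn_sq (x : ℝ) : sgn x ^ 2 = 1 := by
  unfold sgn; split <;> norm_num

/-- type copy of ℝ with measure muI -/
def I0 : Type := ℝ

instance : MeasurableSpace I0 := inferInstanceAs (MeasurableSpace ℝ)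
instance : MeasureSpace I0 := ⟨muI⟩
instance : IsProbabilityMeasure (volume : Measure I0) :=
  inferInstanceAs (IsProbabilityMeasure muI)

lemma integrableOn_sgn {s : Set ℝ} (hs : MeasurableSet s) (hfin : volume s < ⊤) :
    IntegrableOn sgn s volume := by
  apply Integrable.mono' (g := fun _ => (1:ℝ))
  · exact integrableOn_const hfin.ne
  · exact (sgn_meas.aestronglyMeasurable).restrict
  · filter_upwards with x
    rw [Real.norm_eq_abs, abs_sgn]

lemma integral_sgn : ∫ y, sgn y ∂muI = 0 := by
  have hsplit : Set.Icc (0:ℝ) 1 = Set.Icc 0 (1/2) ∪ Set.Ioc (1/2) 1 :=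
    (Set.Icc_union_Ioc_eq_Icc (by norm_num) (by norm_num)).symm
  have hd : Disjoint (Set.Icc (0:ℝ) (1/2)) (Set.Ioc (1/2) 1) := by
    apply Set.disjoint_left.mpr
    rintro x ⟨_, h2⟩ ⟨h3, _⟩
    exact absurd h2 (not_le.mpr h3)
  show ∫ y in Set.Icc (0:ℝ) 1, sgn y = 0
  rw [hsplit, setIntegral_union hd measurableSet_Ioc
    (integrableOn_sgn measurableSet_Icc (by simp [Real.volume_Icc]))
    (integrableOn_sgn measurableSet_Ioc (by simp [Real.volume_Ioc]))]
  have h1 : ∫ y in Set.Icc (0:ℝ) (1/2), sgn y = 1/2 := by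
    have he : Set.EqOn sgn (fun _ => (1:ℝ)) (Set.Icc 0 (1/2)) := fun x hx => if_pos hx.2
    rw [setIntegral_congr_fun measurableSet_Icc he]
    simp [Real.volume_Icc]
  have h2 : ∫ y in Set.Ioc (1/2:ℝ) 1, sgn y = -(1/2) := by
    have he : Set.EqOn sgn (fun _ => (-1:ℝ)) (Set.Ioc (1/2) 1) := fun x hx => if_neg (not_le.mpr hx.1)
    rw [setIntegral_congr_fun measurableSet_Ioc he]
    rw [setIntegral_const, measureReal_def, Real.volume_Ioc]
    norm_num [ENNReal.toReal_ofReal]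
  rw [h1, h2]; ring

lemma integral_sgn_pow (d : ℕ) :
    ∫ y, sgn y ^ d ∂muI = if Even d then 1 else 0 := by
  rcases Nat.even_or_odd d with hd | hd
  · obtain ⟨c, rfl⟩ := hd
    rw [if_pos (by exact ⟨c, rfl⟩ : Even (c + c))]
    have : ∀ y : ℝ, sgn y ^ (c + c) = 1 := by
      intro y
      rw [← two_mul, pow_mul, sgn_sq, one_pow]
    simp only [this]
    simp
  · obtain ⟨c, rfl⟩ := hd
    rw [if_neg (by simp [Nat.even_add_one, Nat.even_mul])]
    have : ∀ y : ℝ, sgn y ^ (2*c + 1) = sgn y := by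
      intro y
      rw [pow_succ, pow_mul, sgn_sq, one_pow, one_mul]
    simp only [this]
    exact integral_sgn

variable {m : ℕ}

/-- degree of `v` in the edge set `F` -/
def dF (F : Finset (Fin m × Fin m)) (v : Fin m) : ℕ :=
  (F.filter fun p => p.1 = v).card + (F.filter fun p => p.2 = v).card

lemma prod_sgn_eq (F : Finset (Fin m × Fin m)) (x : Fin m → ℝ) :
    ∏ p ∈ F, sgn (x p.1) * sgn (x p.2) = ∏ v, sgn (x v) ^ dF F v := by
  rw [Finset.prod_mul_distrib]
  have h1 : ∏ p ∈ F, sgn (x p.1)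
      = ∏ v, sgn (x v) ^ (F.filter fun p => p.1 = v).card := by
    have hfib := Finset.prod_fiberwise_of_maps_to (s := F)
      (t := (Finset.univ : Finset (Fin m))) (g := fun p => p.1)
      (fun p _ => Finset.mem_univ _) (fun p => sgn (x p.1))
    rw [← hfib]
    refine Finset.prod_congr rfl fun v _ => ?_
    rw [Finset.prod_congr rfl (fun p hp => by
      rw [(Finset.mem_filter.1 hp).2] : ∀ p ∈ F.filter fun p => p.1 = v, sgn (x p.1) = sgn (x v)),
      Finset.prod_const]
  have h2 : ∏ p ∈ F, sgn (x p.2)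
      = ∏ v, sgn (x v) ^ (F.filter fun p => p.2 = v).card := by
    have hfib := Finset.prod_fiberwise_of_maps_to (s := F)
      (t := (Finset.univ : Finset (Fin m))) (g := fun p => p.2)
      (fun p _ => Finset.mem_univ _) (fun p => sgn (x p.2))
    rw [← hfib]
    refine Finset.prod_congr rfl fun v _ => ?_
    rw [Finset.prod_congr rfl (fun p hp => by
      rw [(Finset.mem_filter.1 hp).2] : ∀ p ∈ F.filter fun p => p.2 = v, sgn (x p.2) = sgn (x v)),
      Finset.prod_const]
  rw [h1, h2, ← Finset.prod_mul_distrib]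
  exact Finset.prod_congr rfl fun v _ => (pow_add _ _ _).symm

lemma integrable_prod_sgn (F : Finset (Fin m × Fin m)) :
    Integrable (fun x : Fin m → ℝ => ∏ p ∈ F, sgn (x p.1) * sgn (x p.2))
      (Measure.pi fun _ => muI) := by
  apply Integrable.mono' (g := fun _ => (1:ℝ)) (integrable_const 1)
  · exact (Finset.measurable_prod F fun p _ =>
      ((sgn_meas.comp (measurable_pi_apply p.1)).mul
        (sgn_meas.comp (measurable_pi_apply p.2)))).aestronglyMeasurable
  · filter_upwards with x
    rw [Real.norm_eq_abs, Finset.abs_prod]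
    apply Finset.prod_le_one (fun p _ => abs_nonneg _) fun p _ => ?_
    rw [abs_mul, abs_sgn, abs_sgn]; norm_num

lemma integral_prod_sgn (F : Finset (Fin m × Fin m)) :
    ∫ x : Fin m → ℝ, ∏ p ∈ F, sgn (x p.1) * sgn (x p.2) ∂(Measure.pi fun _ => muI)
      = if ∀ v, Even (dF F v) then 1 else 0 := by
  simp_rw [prod_sgn_eq F]
  have key : ∫ x : Fin m → ℝ, ∏ v, sgn (x v) ^ dF F v ∂(Measure.pi fun _ => muI)
      = ∏ v, ∫ y, sgn y ^ dF F v ∂muI :=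
    MeasureTheory.integral_fintype_prod_eq_prod (ι := Fin m) (E := fun _ => ℝ) (μ := fun _ => muI)
      (f := fun v (y : ℝ) => sgn y ^ dF F v)
  rw [key]
  simp_rw [integral_sgn_pow]
  by_cases hall : ∀ v, Even (dF F v)
  · rw [if_pos hall]
    exact Finset.prod_eq_one fun v _ => if_pos (hall v)
  · rw [if_neg hall]
    push_neg at hall
    obtain ⟨v, hv⟩ := hall
    exact Finset.prod_eq_zero (Finset.mem_univ v) (if_neg hv)

lemma homDensity_eq (H : SimpleGraph (Fin m)) [DecidableRel H.Adj] (a b : ℝ) :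
    homDensity H (fun x y => a + b * (sgn x * sgn y)) =
    ∑ F ∈ (edgeFinset' H).powerset,
      a ^ (edgeCount H - F.card) * b ^ F.card
        * (if ∀ v, Even (dF F v) then 1 else 0) := by
  unfold homDensity
  have hpt : ∀ x : Fin m → ℝ,
      (∏ p ∈ edgeFinset' H, (a + b * (sgn (x p.1) * sgn (x p.2))))
      = ∑ F ∈ (edgeFinset' H).powerset,
          a ^ (edgeCount H - F.card) * b ^ F.card
            * ∏ p ∈ F, sgn (x p.1) * sgn (x p.2) := by
    intro x
    have hexp := Finset.prod_add (fun p : Fin m × Fin m => b * (sgn (x p.1) * sgn (x p.2)))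
      (fun _ => a) (edgeFinset' H)
    rw [show (∏ p ∈ edgeFinset' H, (a + b * (sgn (x p.1) * sgn (x p.2))))
        = ∏ p ∈ edgeFinset' H, (b * (sgn (x p.1) * sgn (x p.2)) + a) from
        Finset.prod_congr rfl fun p _ => add_comm _ _, hexp]
    refine Finset.sum_congr rfl fun F hF => ?_
    rw [Finset.prod_mul_distrib, Finset.prod_const, Finset.prod_const,
        Finset.card_sdiff_of_subset (Finset.mem_powerset.1 hF)]
    show b ^ F.card * (∏ p ∈ F, sgn (x p.1) * sgn (x p.2)) * a ^ (edgeCount H - F.card) = _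
    ring
  simp_rw [hpt]
  rw [MeasureTheory.integral_finset_sum _
    (fun F _ => ((integrable_prod_sgn F).const_mul _))]
  refine Finset.sum_congr rfl fun F _ => ?_
  rw [integral_const_mul, integral_prod_sgn]

open SimpleGraph in
lemma exists_cycle_of_no_leaf (G : SimpleGraph (Fin m)) [DecidableRel G.Adj]
    (hedge : ∃ x y, G.Adj x y) (hdeg : ∀ v, G.degree v ≠ 1) :
    ∃ (a : Fin m) (c : G.Walk a a), c.IsCycle := by
  by_contra hno
  push_neg at hno
  obtain ⟨x, y, hxy⟩ := hedge
  have key : ∀ n : ℕ, ∃ (u v : Fin m) (q : G.Walk x u) (h : G.Adj u v),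
      (q.concat h).IsPath ∧ (q.concat h).length = n + 1 := by
    intro n
    induction n with
    | zero =>
        refine ⟨x, y, Walk.nil, hxy, ?_, ?_⟩
        · rw [Walk.concat_nil]
          simp [Walk.cons_isPath_iff, hxy.ne]
        · simp [Walk.length_concat]
    | succ n ih =>
        obtain ⟨u, v, q, huv, hp, hlen⟩ := ih
        set p := q.concat huv with hpdef
        have hrev : p.reverse.IsPath := (Walk.isPath_reverse_iff p).mpr hp
        rw [hpdef, Walk.reverse_concat, Walk.cons_isPath_iff] at hrev
        obtain ⟨hqrev, hvq⟩ := hrev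
        have hvq' : v ∉ q.support := by
          rwa [Walk.support_reverse, List.mem_reverse] at hvq
        have hu : u ∈ G.neighborFinset v := by
          rw [mem_neighborFinset]; exact huv.symm
        have h2 : 1 < G.degree v := by
          have h1 : 0 < G.degree v := Finset.card_pos.mpr ⟨u, hu⟩
          have := hdeg v; omega
        obtain ⟨w, hw, hwu⟩ := Finset.exists_mem_ne h2 u
        rw [mem_neighborFinset] at hw
        by_cases hws : w ∈ p.support
        · exfalso
          have hr := hp.dropUntil hws
          have hwv : w ≠ v := fun h => G.loopless.irrefl v (h ▸ hw)
          have hedge_not : s(w, v) ∉ (p.dropUntil w hws).edges := by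
            intro hmem
            have hmem' : s(w,v) ∈ p.edges := Walk.edges_dropUntil_subset p hws hmem
            rw [hpdef, Walk.edges_concat] at hmem'
            simp only [List.concat_eq_append, List.mem_append, List.mem_singleton] at hmem'
            rcases hmem' with h' | h'
            · exact hvq' (Walk.snd_mem_support_of_mem_edges q h')
            · rw [Sym2.eq_iff] at h'
              rcases h' with ⟨h1, _⟩ | ⟨h1, _⟩
              · exact hwu h1
              · exact hwv h1
          exact hno w (Walk.cons hw.symm (p.dropUntil w hws).reverse)
            ((Walk.cons_isCycle_iff _ _).mpr ⟨hr.reverse,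
              by rwa [Walk.edges_reverse, List.mem_reverse]⟩)
        · refine ⟨v, w, p, hw, ?_, ?_⟩
          · rw [← Walk.isPath_reverse_iff, Walk.reverse_concat, Walk.cons_isPath_iff]
            refine ⟨(Walk.isPath_reverse_iff p).mpr hp, ?_⟩
            rwa [Walk.support_reverse, List.mem_reverse]
          · rw [Walk.length_concat, hlen]
  obtain ⟨u, v, q, h, hp, hlen⟩ := key (Fintype.card (Fin m))
  have := hp.length_lt
  omega

/-- the graph spanned by an edge finset -/
def GF (F : Finset (Fin m × Fin m)) : SimpleGraph (Fin m) where
  Adj a b := ((a,b) ∈ F ∨ (b,a) ∈ F) ∧ a ≠ b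
  symm := ⟨fun a b h => ⟨h.1.symm, h.2.symm⟩⟩
  loopless := ⟨fun a h => h.2 rfl⟩

instance (F : Finset (Fin m × Fin m)) : DecidableRel (GF F).Adj :=
  fun _ _ => instDecidableAnd

lemma degree_GF {H : SimpleGraph (Fin m)} [DecidableRel H.Adj]
    (F : Finset (Fin m × Fin m)) (hsub : F ⊆ edgeFinset' H) (v : Fin m) :
    (GF F).degree v = dF F v := by
  classical
  have hlt : ∀ p ∈ F, p.1 < p.2 := fun p hp => (Finset.mem_filter.1 (hsub hp)).2.1
  have hdisj : Disjoint (F.filter fun p => p.1 = v) (F.filter fun p => p.2 = v) := by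
    rw [Finset.disjoint_left]
    rintro p h1 h2
    have h := hlt p (Finset.mem_filter.1 h1).1
    rw [(Finset.mem_filter.1 h1).2, (Finset.mem_filter.1 h2).2] at h
    exact lt_irrefl _ h
  have hun : dF F v
      = ((F.filter fun p => p.1 = v) ∪ (F.filter fun p => p.2 = v)).card :=
    (Finset.card_union_of_disjoint hdisj).symm
  rw [hun]
  show ((GF F).neighborFinset v).card = _
  apply Finset.card_bij (fun w _ => if (v, w) ∈ F then (v,w) else (w,v))
  · intro w hw
    rw [SimpleGraph.mem_neighborFinset] at hw
    by_cases hvw : (v,w) ∈ F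
    · rw [if_pos hvw]
      exact Finset.mem_union_left _ (Finset.mem_filter.2 ⟨hvw, rfl⟩)
    · rw [if_neg hvw]
      rcases hw.1 with h | h
      · exact absurd h hvw
      · exact Finset.mem_union_right _ (Finset.mem_filter.2 ⟨h, rfl⟩)
  · intro w1 hw1 w2 hw2 heq
    split_ifs at heq <;> rw [Prod.mk.injEq] at heq
    · exact heq.2
    · exact heq.2.trans heq.1
    · exact heq.1.trans heq.2
    · exact heq.1
  · rintro ⟨p1, p2⟩ hp
    rcases Finset.mem_union.1 hp with h | h
    · obtain ⟨hmem, hfst⟩ := Finset.mem_filter.1 h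
      dsimp at hfst
      subst hfst
      refine ⟨p2, ?_, ?_⟩
      · rw [SimpleGraph.mem_neighborFinset]
        exact ⟨Or.inl hmem, (hlt _ hmem).ne⟩
      · rw [if_pos hmem]
    · obtain ⟨hmem, hsnd⟩ := Finset.mem_filter.1 h
      dsimp at hsnd
      subst hsnd
      refine ⟨p1, ?_, ?_⟩
      · rw [SimpleGraph.mem_neighborFinset]
        exact ⟨Or.inr hmem, (hlt _ hmem).ne'⟩
      · have hnot : (p2, p1) ∉ F := by
          intro hcon
          exact absurd (hlt _ hmem) (not_lt.mpr (hlt _ hcon).le)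
        rw [if_neg hnot]

open SimpleGraph in
lemma le_card_of_even {H : SimpleGraph (Fin m)} [DecidableRel H.Adj] {l : ℕ}
    (hgirth' : H.egirth = (l : ℕ∞)) (F : Finset (Fin m × Fin m))
    (hsub : F ⊆ edgeFinset' H) (hne : F.Nonempty)
    (heven : ∀ v, Even (dF F v)) : l ≤ F.card := by
  classical
  have hlt : ∀ p ∈ F, p.1 < p.2 := fun p hp => (Finset.mem_filter.1 (hsub hp)).2.1
  have hle : GF F ≤ H := by
    intro a b hab
    rcases hab.1 with h | h
    · exact (Finset.mem_filter.1 (hsub h)).2.2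
    · exact ((Finset.mem_filter.1 (hsub h)).2.2).symm
  obtain ⟨p, hp⟩ := hne
  have hedge : ∃ x y, (GF F).Adj x y :=
    ⟨p.1, p.2, ⟨Or.inl (by rwa [Prod.mk.eta]), (hlt p hp).ne⟩⟩
  have hdeg : ∀ v, (GF F).degree v ≠ 1 := by
    intro v h1
    have hev := heven v
    rw [← degree_GF F hsub v, h1] at hev
    simp at hev
  obtain ⟨a, c, hc⟩ := exists_cycle_of_no_leaf (GF F) hedge hdeg
  have hc' : (c.mapLe hle).IsCycle := hc.mapLe hle
  have hlen1 : (l : ℕ∞) ≤ (c.mapLe hle).length := by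
    rw [← hgirth']
    exact le_egirth.mp le_rfl a _ hc'
  have hlen2 : (c.mapLe hle).length = c.length := by
    simp [Walk.mapLe]
  have hnodup : c.edges.Nodup := hc.isCircuit.isTrail.edges_nodup
  have hsubE : c.edges.toFinset ⊆ F.image (fun p => s(p.1, p.2)) := by
    intro e he
    rw [List.mem_toFinset] at he
    have heE : e ∈ (GF F).edgeSet := Walk.edges_subset_edgeSet c he
    revert heE
    refine Sym2.ind (fun x y heE => ?_) e
    rw [mem_edgeSet] at heE
    rcases heE.1 with h | h
    · exact Finset.mem_image.2 ⟨(x,y), h, rfl⟩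
    · exact Finset.mem_image.2 ⟨(y,x), h, Sym2.eq_swap⟩
  have hclen : c.length ≤ F.card := by
    calc c.length = c.edges.length := (Walk.length_edges c).symm
    _ = c.edges.toFinset.card := (List.toFinset_card_of_nodup hnodup).symm
    _ ≤ (F.image (fun p => s(p.1, p.2))).card := Finset.card_le_card hsubE
    _ ≤ F.card := Finset.card_image_le
  have hlc : l ≤ c.length := by
    rw [hlen2] at hlen1
    exact_mod_cast hlen1
  omega

open SimpleGraph in
lemma exists_F0 {H : SimpleGraph (Fin m)} [DecidableRel H.Adj] {l : ℕ}
    (hgirthN : H.girth = l) (hnacyc : ¬ H.IsAcyclic) :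
    ∃ F : Finset (Fin m × Fin m), F ⊆ edgeFinset' H ∧ F.card = l ∧
      ∀ v, Even (dF F v) := by
  classical
  obtain ⟨a, w, hw, hlenw⟩ := exists_girth_eq_length.mpr hnacyc
  have hwl : w.length = l := by rw [← hlenw, hgirthN]
  have hnodup : w.edges.Nodup := hw.isCircuit.isTrail.edges_nodup
  set F : Finset (Fin m × Fin m) :=
    (edgeFinset' H).filter (fun p => s(p.1, p.2) ∈ w.edges) with hFdef
  have hsub : F ⊆ edgeFinset' H := Finset.filter_subset _ _
  have hlt : ∀ p ∈ F, p.1 < p.2 := fun p hp => (Finset.mem_filter.1 (hsub hp)).2.1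
  -- surjectivity helper
  have hrep : ∀ e ∈ w.edges, ∃ p ∈ F, s(p.1, p.2) = e := by
    intro e he
    have heE : e ∈ H.edgeSet := Walk.edges_subset_edgeSet w he
    revert heE he
    refine Sym2.ind (fun x y he heE => ?_) e
    rw [mem_edgeSet] at heE
    rcases lt_or_gt_of_ne heE.ne with hxy | hxy
    · refine ⟨(x,y), ?_, rfl⟩
      rw [hFdef, Finset.mem_filter]
      exact ⟨Finset.mem_filter.2 ⟨Finset.mem_univ _, hxy, heE⟩, he⟩
    · refine ⟨(y,x), ?_, Sym2.eq_swap⟩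
      rw [hFdef, Finset.mem_filter]
      refine ⟨Finset.mem_filter.2 ⟨Finset.mem_univ _, hxy, heE.symm⟩, ?_⟩
      rwa [show s(((y,x) : Fin m × Fin m).1, ((y,x) : Fin m × Fin m).2) = s(x,y) from Sym2.eq_swap]
  have hinj : ∀ p1 ∈ F, ∀ p2 ∈ F,
      s(p1.1, p1.2) = s(p2.1, p2.2) → p1 = p2 := by
    rintro ⟨x1,y1⟩ h1 ⟨x2,y2⟩ h2 heq
    rw [Sym2.eq_iff] at heq
    have := hlt _ h1
    have := hlt _ h2
    rcases heq with ⟨rfl, rfl⟩ | ⟨rfl, rfl⟩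
    · rfl
    · dsimp at *; omega
  refine ⟨F, hsub, ?_, ?_⟩
  · -- card
    have : F.card = w.edges.toFinset.card := by
      apply Finset.card_bij (fun p _ => s(p.1, p.2))
      · intro p hp
        rw [List.mem_toFinset]
        exact (Finset.mem_filter.1 hp).2
      · exact hinj
      · intro e he
        rw [List.mem_toFinset] at he
        obtain ⟨p, hp, hpe⟩ := hrep e he
        exact ⟨p, hp, hpe⟩
    rw [this, List.toFinset_card_of_nodup hnodup, Walk.length_edges, hwl]
  · -- evenness
    intro v
    have hdisj : Disjoint (F.filter fun p => p.1 = v) (F.filter fun p => p.2 = v) := by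
      rw [Finset.disjoint_left]
      rintro p h1 h2
      have h := hlt p (Finset.mem_filter.1 h1).1
      rw [(Finset.mem_filter.1 h1).2, (Finset.mem_filter.1 h2).2] at h
      exact lt_irrefl _ h
    have hcard : dF F v = (w.edges.filter (fun e => v ∈ e)).toFinset.card := by
      rw [show dF F v
          = ((F.filter fun p => p.1 = v) ∪ (F.filter fun p => p.2 = v)).card from
          (Finset.card_union_of_disjoint hdisj).symm]
      apply Finset.card_bij (fun p _ => s(p.1, p.2))
      · rintro ⟨x, y⟩ hp
        rcases Finset.mem_union.1 hp with h | h <;>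
          obtain ⟨hmem, hv⟩ := Finset.mem_filter.1 h <;> dsimp at hv <;> subst hv
        · rw [List.mem_toFinset, List.mem_filter]
          exact ⟨(Finset.mem_filter.1 hmem).2, by simp⟩
        · rw [List.mem_toFinset, List.mem_filter]
          exact ⟨(Finset.mem_filter.1 hmem).2, by simp⟩
      · intro p1 hp1 p2 hp2 heq
        have m1 : p1 ∈ F := (Finset.mem_union.1 hp1).elim
          (fun h => (Finset.mem_filter.1 h).1) (fun h => (Finset.mem_filter.1 h).1)
        have m2 : p2 ∈ F := (Finset.mem_union.1 hp2).elim
          (fun h => (Finset.mem_filter.1 h).1) (fun h => (Finset.mem_filter.1 h).1)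
        exact hinj p1 m1 p2 m2 heq
      · intro e he
        rw [List.mem_toFinset, List.mem_filter] at he
        obtain ⟨hew, hev⟩ := he
        obtain ⟨p, hp, hpe⟩ := hrep e hew
        refine ⟨p, ?_, hpe⟩
        have hv : v ∈ s(p.1, p.2) := by rw [hpe]; exact of_decide_eq_true hev
        rw [Sym2.mem_iff] at hv
        rcases hv with h | h
        · exact Finset.mem_union_left _ (Finset.mem_filter.2 ⟨hp, h.symm⟩)
        · exact Finset.mem_union_right _ (Finset.mem_filter.2 ⟨hp, h.symm⟩)
    rw [hcard, List.toFinset_card_of_nodup (hnodup.filter _),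
        ← List.countP_eq_length_filter]
    have := (hw.isCircuit.isTrail.even_countP_edges_iff v).mpr (fun h => absurd rfl h)
    exact this

section coeffs
variable {k : ℕ}

/-- coefficients 1, 1, -2, 0, ..., 0 -/
def cf (k : ℕ) : Fin k → ℝ := fun i =>
  if i.val = 0 then 1 else if i.val = 1 then 1 else if i.val = 2 then -2 else 0

lemma cf_abs_le (i : Fin k) : |cf k i| ≤ 2 := by
  unfold cf
  split_ifs <;> norm_num

lemma cf_sum_pow (hk : 3 ≤ k) {j : ℕ} (hj : 1 ≤ j) :
    ∑ i, cf k i ^ j = 2 + (-2 : ℝ) ^ j := by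
  classical
  have h0 : (0:ℕ) < k := by omega
  have h1 : (1:ℕ) < k := by omega
  have h2 : (2:ℕ) < k := by omega
  set i0 : Fin k := ⟨0, h0⟩
  set i1 : Fin k := ⟨1, h1⟩
  set i2 : Fin k := ⟨2, h2⟩
  have hsub : ({i0, i1, i2} : Finset (Fin k)) ⊆ Finset.univ := Finset.subset_univ _
  rw [← Finset.sum_subset hsub ?hzero]
  · have hne01 : i0 ≠ i1 := by simp [i0, i1, Fin.ext_iff]
    have hne02 : i0 ≠ i2 := by simp [i0, i2, Fin.ext_iff]
    have hne12 : i1 ≠ i2 := by simp [i1, i2, Fin.ext_iff]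
    rw [Finset.sum_insert (by simp [hne01, hne02]),
        Finset.sum_insert (by simp [hne12]), Finset.sum_singleton]
    have e0 : cf k i0 = 1 := by simp [cf, i0]
    have e1 : cf k i1 = 1 := by simp [cf, i1]
    have e2 : cf k i2 = -2 := by simp [cf, i2]
    rw [e0, e1, e2, one_pow]
    ring
  · intro i _ hi
    simp only [Finset.mem_insert, Finset.mem_singleton] at hi
    push_neg at hi
    obtain ⟨h0', h1', h2'⟩ := hi
    have : cf k i = 0 := by
      unfold cf
      rw [if_neg, if_neg, if_neg]
      · intro h; exact h2' (by simp [i2, Fin.ext_iff, h])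
      · intro h; exact h1' (by simp [i1, Fin.ext_iff, h])
      · intro h; exact h0' (by simp [i0, Fin.ext_iff, h])
    rw [this, zero_pow (by omega)]

lemma cf_sum (hk : 3 ≤ k) : ∑ i, cf k i = 0 := by
  have := cf_sum_pow (k := k) hk (j := 1) le_rfl
  simpa using this

end coeffs

end OG

open OG in
/-- for `k ≥ 3`, no graph of odd girth is locally `k`-common. -/
theorem odd_girth_not_locally_kCommon {m : ℕ} (H : SimpleGraph (Fin m))
    [DecidableRel H.Adj] (k : ℕ) (hk : 3 ≤ k)
    (l : ℕ) (hodd : Odd l) (hgirth : H.girth = (l : ℕ∞)) :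
    ∀ ε₀ : ℝ, 0 < ε₀ →
      ∃ W : Fin k → ℝ → ℝ → ℝ, (∀ i, IsGraphon (W i)) ∧
        (∀ x y, ∑ i, W i x y = 1) ∧
        (∀ i, ∀ x y, |W i x y - 1 / k| ≤ ε₀) ∧
        ∑ i, homDensity H (W i) < (k : ℝ) ^ (1 - (edgeCount H : ℤ)) := by
  intro ε₀ hε₀
  classical
  set e := edgeCount H with he
  set E := edgeFinset' H with hE
  -- girth facts
  have hgl : H.girth = l := by exact_mod_cast hgirth
  have hl0 : l ≠ 0 := by rintro rfl; have := Nat.odd_iff.mp hodd; omega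
  have hnacyc : ¬ H.IsAcyclic := fun h => hl0 (hgl ▸ h.girth_eq_zero)
  have hl3 : 3 ≤ l := hgl ▸ SimpleGraph.three_le_girth hnacyc
  have hegirth : H.egirth = (l : ℕ∞) := by
    have htop : H.egirth ≠ ⊤ := fun h => hnacyc (SimpleGraph.egirth_eq_top.mp h)
    rw [← ENat.coe_toNat htop]
    exact congrArg Nat.cast hgl
  -- the special even subgraph
  obtain ⟨F₀, hF0sub, hF0card, hF0even⟩ := exists_F0 hgl hnacyc
  have hle_el : l ≤ e := hF0card ▸ Finset.card_le_card hF0sub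
  -- basic positivity
  have hk0 : (0:ℝ) < k := by exact_mod_cast (by omega : 0 < k)
  have hk1 : (1:ℝ) ≤ k := by exact_mod_cast (by omega : 1 ≤ k)
  -- constants
  set A : ℝ := (1/(k:ℝ))^(e-l) * ((2:ℝ)^l - 2) with hA
  set B : ℝ := (2:ℝ)^(2*e+1) with hB
  have h2l : (2:ℝ) + 2 ≤ 2^l := by
    have : (2:ℝ)^2 ≤ 2^l := pow_le_pow_right₀ one_le_two (by omega)
    norm_num at this
    linarith
  have hApos : 0 < A := by
    apply mul_pos (by positivity)
    linarith
  have hBpos : 0 < B := by positivity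
  -- epsilon
  set ε : ℝ := min (min (ε₀/2) (1/(2*k))) (min 1 (A/(2*B))) with hεdef
  have hεpos : 0 < ε := by
    apply lt_min (lt_min (by linarith) (by positivity)) (lt_min one_pos (by positivity))
  have hεe0 : ε ≤ ε₀/2 := le_trans (min_le_left _ _) (min_le_left _ _)
  have hεk : ε ≤ 1/(2*k) := le_trans (min_le_left _ _) (min_le_right _ _)
  have hε1 : ε ≤ 1 := le_trans (min_le_right _ _) (min_le_left _ _)
  have hεAB : ε ≤ A/(2*B) := le_trans (min_le_right _ _) (min_le_right _ _)
  -- the graphons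
  set W : Fin k → ℝ → ℝ → ℝ :=
    fun i => fun x y => 1/(k:ℝ) + (cf k i * ε) * (sgn x * sgn y) with hW
  have hWdev : ∀ i x y, |W i x y - 1/(k:ℝ)| ≤ 2 * ε := by
    intro i x y
    have : W i x y - 1/(k:ℝ) = (cf k i * ε) * (sgn x * sgn y) := by rw [hW]; ring
    rw [this, abs_mul, abs_mul, abs_mul, abs_sgn, abs_sgn, abs_of_nonneg hεpos.le]
    calc |cf k i| * ε * (1*1) ≤ 2 * ε * (1*1) :=
          mul_le_mul_of_nonneg_right (mul_le_mul_of_nonneg_right (cf_abs_le i) hεpos.le)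
            (by norm_num)
      _ = 2 * ε := by ring
  have h2εk : 2 * ε ≤ 1/(k:ℝ) := by
    have h : (1:ℝ)/(2*k) = (1/k)/2 := by ring
    rw [h] at hεk
    linarith
  refine ⟨W, ?_, ?_, ?_, ?_⟩
  · -- graphon
    intro i
    refine ⟨?_, ?_, ?_⟩
    · show Measurable fun p : ℝ × ℝ => 1/(k:ℝ) + (cf k i * ε) * (sgn p.1 * sgn p.2)
      exact measurable_const.add (measurable_const.mul
        ((sgn_meas.comp measurable_fst).mul (sgn_meas.comp measurable_snd)))
    · intro x y; rw [hW]; ring_nf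
    · intro x y
      have hdev := hWdev i x y
      rw [abs_le] at hdev
      obtain ⟨hd1, hd2⟩ := hdev
      have hk3 : (3:ℝ) ≤ k := by exact_mod_cast hk
      have hkle : 1/(k:ℝ) ≤ 1/3 := by
        apply one_div_le_one_div_of_le (by norm_num) hk3
      simp only [hW] at hd1 hd2 ⊢
      constructor
      · linarith
      · linarith
  · -- sum to one
    intro x y
    rw [hW]
    simp only
    rw [Finset.sum_add_distrib, Finset.sum_const, Finset.card_univ, Fintype.card_fin]
    have hsum0 : ∑ i : Fin k, (cf k i * ε) * (sgn x * sgn y)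
        = (∑ i : Fin k, cf k i) * ε * (sgn x * sgn y) := by
      rw [Finset.sum_mul, Finset.sum_mul]
    rw [hsum0, cf_sum hk]
    rw [nsmul_eq_mul]
    rw [mul_one_div, div_self (ne_of_gt hk0)]
    ring
  · -- sup bound
    intro i x y
    have := hWdev i x y
    linarith
  · -- the density estimate
    set g : Finset (Fin m × Fin m) → ℝ := fun F =>
      (1/(k:ℝ))^(e - F.card) * ε^F.card
        * (if ∀ v, Even (dF F v) then (1:ℝ) else 0) * (∑ i, cf k i ^ F.card)
      with hg
    have hdens : ∑ i, homDensity H (W i) = ∑ F ∈ E.powerset, g F := by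
      simp only [hW]
      simp_rw [homDensity_eq H (1/(k:ℝ))]
      rw [Finset.sum_comm]
      refine Finset.sum_congr rfl fun F _ => ?_
      simp only [hg]
      calc ∑ i, (1/(k:ℝ))^(edgeCount H - F.card) * (cf k i * ε)^F.card
              * (if ∀ v, Even (dF F v) then (1:ℝ) else 0)
          = ∑ i, ((1/(k:ℝ))^(e - F.card) * ε^F.card
              * (if ∀ v, Even (dF F v) then (1:ℝ) else 0)) * cf k i ^ F.card := by
            refine Finset.sum_congr rfl fun i _ => ?_
            rw [mul_pow]
            ring
        _ = _ := by rw [← Finset.mul_sum]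
    have hemem : ∅ ∈ E.powerset := Finset.empty_mem_powerset _
    have hF0mem : F₀ ∈ E.powerset.erase ∅ := by
      rw [Finset.mem_erase]
      constructor
      · intro hcon
        rw [hcon, Finset.card_empty] at hF0card
        omega
      · exact Finset.mem_powerset.2 hF0sub
    have hgempty : g ∅ = (1/(k:ℝ))^e * k := by
      simp only [hg, Finset.card_empty, pow_zero, mul_one]
      rw [if_pos (fun v => by simp [dF])]
      simp [Finset.card_univ]
    have hkpow : (1/(k:ℝ))^e * k = (k:ℝ)^(1-(e:ℤ)) := by
      rw [zpow_sub₀ (ne_of_gt hk0), zpow_one, zpow_natCast, one_div, inv_pow]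
      ring
    have hl1 : 1 ≤ l := by omega
    have hgF0 : g F₀ = -(A * ε^l) := by
      simp only [hg, hF0card]
      rw [if_pos hF0even, cf_sum_pow hk hl1, Odd.neg_pow hodd, hA]
      ring
    have hD0 : (0:ℝ) ≤ ε^(l+1) * 2^(e+1) := by positivity
    have hrest : ∀ F ∈ (E.powerset.erase ∅).erase F₀, g F ≤ ε^(l+1) * 2^(e+1) := by
      intro F hF
      obtain ⟨hFne0', hF'⟩ := Finset.mem_erase.1 hF
      obtain ⟨hFne, hFP⟩ := Finset.mem_erase.1 hF'
      have hFsub : F ⊆ E := Finset.mem_powerset.1 hFP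
      have hFnonempty : F.Nonempty := Finset.nonempty_of_ne_empty hFne
      have hj1 : 1 ≤ F.card := Finset.card_pos.mpr hFnonempty
      have hje : F.card ≤ e := Finset.card_le_card hFsub
      by_cases hχF : ∀ v, Even (dF F v)
      · have hjl : l ≤ F.card := le_card_of_even hegirth F hFsub hFnonempty hχF
        simp only [hg]
        rw [if_pos hχF, cf_sum_pow hk hj1]
        rcases Nat.even_or_odd F.card with hpar | hpar
        · have hjl1 : l + 1 ≤ F.card := by
            rcases Nat.lt_or_ge F.card (l+1) with h | h
            · exfalso
              have hjeq : F.card = l := by omega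
              rw [hjeq] at hpar
              exact (Nat.not_odd_iff_even.mpr hpar) hodd
            · exact h
          rw [Even.neg_pow hpar]
          have h1 : (1/(k:ℝ))^(e-F.card) ≤ 1 :=
            pow_le_one₀ (by positivity) (by rw [div_le_one hk0]; exact hk1)
          have h2 : ε^F.card ≤ ε^(l+1) := pow_le_pow_of_le_one hεpos.le hε1 hjl1
          have h3 : (2:ℝ) + 2^F.card ≤ 2^(e+1) := by
            have h2j : (2:ℝ) ≤ 2^F.card := by
              calc (2:ℝ) = 2^1 := (pow_one 2).symm
                _ ≤ 2^F.card := pow_le_pow_right₀ one_le_two hj1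
            have hsum2 : (2:ℝ)^F.card + 2^F.card = 2^(F.card+1) := by
              rw [pow_succ]; ring
            have hj2 : (2:ℝ)^(F.card+1) ≤ 2^(e+1) :=
              pow_le_pow_right₀ one_le_two (by omega)
            linarith
          have hstep : (1/(k:ℝ))^(e-F.card) * ε^F.card ≤ ε^(l+1) := by
            calc (1/(k:ℝ))^(e-F.card) * ε^F.card ≤ 1 * ε^(l+1) :=
                  mul_le_mul h1 h2 (by positivity) zero_le_one
              _ = ε^(l+1) := one_mul _
          calc (1/(k:ℝ))^(e-F.card) * ε^F.card * 1 * (2 + 2^F.card)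
              = ((1/(k:ℝ))^(e-F.card) * ε^F.card) * (2 + 2^F.card) := by ring
            _ ≤ ε^(l+1) * 2^(e+1) :=
                mul_le_mul hstep h3 (by positivity) (by positivity)
        · rw [Odd.neg_pow hpar]
          have h2j : (2:ℝ) ≤ 2^F.card := by
            calc (2:ℝ) = 2^1 := (pow_one 2).symm
              _ ≤ 2^F.card := pow_le_pow_right₀ one_le_two hj1
          have hneg : (1/(k:ℝ))^(e-F.card) * ε^F.card * 1 * (2 + -2^F.card) ≤ 0 := by
            apply mul_nonpos_of_nonneg_of_nonpos (by positivity)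
            linarith
          linarith
      · simp only [hg]
        rw [if_neg hχF, mul_zero, zero_mul]
        exact hD0
    have hcard_rest : (((E.powerset.erase ∅).erase F₀)).card ≤ 2^e := by
      calc (((E.powerset.erase ∅).erase F₀)).card
          ≤ E.powerset.card :=
            Finset.card_le_card ((Finset.erase_subset _ _).trans (Finset.erase_subset _ _))
        _ = 2^e := Finset.card_powerset E
    have hsum_rest : ∑ F ∈ (E.powerset.erase ∅).erase F₀, g F
        ≤ 2^e * (ε^(l+1) * 2^(e+1)) := by
      calc ∑ F ∈ (E.powerset.erase ∅).erase F₀, g F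
          ≤ (((E.powerset.erase ∅).erase F₀)).card • (ε^(l+1) * 2^(e+1)) :=
            Finset.sum_le_card_nsmul _ _ _ hrest
        _ = ((((E.powerset.erase ∅).erase F₀)).card : ℝ) * (ε^(l+1) * 2^(e+1)) :=
            nsmul_eq_mul _ _
        _ ≤ 2^e * (ε^(l+1) * 2^(e+1)) := by
            apply mul_le_mul_of_nonneg_right _ hD0
            exact_mod_cast hcard_rest
    have htotal : ∑ i, homDensity H (W i)
        = g ∅ + (g F₀ + ∑ F ∈ (E.powerset.erase ∅).erase F₀, g F) := by
      rw [hdens, ← Finset.add_sum_erase _ g hemem, ← Finset.add_sum_erase _ g hF0mem]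
    have hBe : (2:ℝ)^e * (ε^(l+1) * 2^(e+1)) = B * ε^(l+1) := by
      rw [hB, show 2*e+1 = e + (e+1) by omega, pow_add]
      ring
    have hfin : B * ε^(l+1) < A * ε^l := by
      have hεl : 0 < ε^l := pow_pos hεpos l
      have h5 : B * ε ≤ A/2 := by
        have h6 := mul_le_mul_of_nonneg_left hεAB (le_of_lt hBpos)
        have heq : B * (A/(2*B)) = A/2 := by field_simp
        linarith
      calc B * ε^(l+1) = (B * ε) * ε^l := by rw [pow_succ]; ring
        _ ≤ (A/2) * ε^l := mul_le_mul_of_nonneg_right h5 hεl.le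
        _ < A * ε^l := by nlinarith
    rw [htotal, hgF0, hgempty.trans hkpow]
    rw [hBe] at hsum_rest
    linarith

end
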